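/- Let 0 < μ_2 < μ_3 < μ_4 and ρ_1, ρ_2, ρ_3, ρ_4 ∈ ℝ. If ρ_1 ≥ 0, ρ_1 + ρ_2 + ρ_3 + ρ_4 ≥ 0, ρ_1 + (1 − μ_3/μ_2)ρ_3 + (1 − μ_4/μ_2)ρ_4 ≥ 0, and ρ_1 + (1 − μ_4/μ_3)(1 − μ_4/μ_2)ρ_4 ≥ 0, then ρ_1 + ρ_2 e^{−μ_2 s} + ρ_3 e^{−μ_3 s} + ρ_4 e^{−μ_4 s} ≥ 0 for every s ∈ ℝ_+ (in particular ρ_1 λ_1^t + ρ_2 λ_2^t + ρ_3 λ_3^t + ρ_4 λ_4^t ≥ 0 for all t ∈ ℕ when μ_i = −ln(λ_i/λ_1) with λ_1 > λ_2 > λ_3 > λ_4 > 0). -/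

import Mathlib

/-- Grönwall-type key lemma: if `0 ≤ μ f + f'` on `[0,∞)` and `0 ≤ f 0`, then `0 ≤ f` on `[0,∞)`. -/
lemma nonneg_of_mul_add_deriv_nonneg (μ : ℝ) (f f' : ℝ → ℝ)
    (hf : ∀ x, HasDerivAt f (f' x) x) (h0 : 0 ≤ f 0)
    (hd : ∀ s, 0 ≤ s → 0 ≤ μ * f s + f' s) :
    ∀ s, 0 ≤ s → 0 ≤ f s := by
  intro s hs
  rcases eq_or_lt_of_le hs with rfl | hs
  · exact h0
  set g : ℝ → ℝ := fun x => Real.exp (μ * x) * f x with hg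
  have hg' : ∀ x, HasDerivAt g (Real.exp (μ * x) * (μ * f x + f' x)) x := by
    intro x
    have h1 : HasDerivAt (fun x : ℝ => Real.exp (μ * x)) (μ * Real.exp (μ * x)) x := by
      simpa [mul_comm, Function.comp_def] using (Real.hasDerivAt_exp (μ * x)).comp x
        ((hasDerivAt_id x).const_mul μ)
    have := h1.mul (hf x)
    exact this.congr_deriv (by ring)
  obtain ⟨c, hc, hceq⟩ := exists_hasDerivAt_eq_slope g
      (fun x => Real.exp (μ * x) * (μ * f x + f' x)) hs
      (fun x _ => (hg' x).continuousAt.continuousWithinAt)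
      (fun x _ => hg' x)
  have hc0 : 0 ≤ c := le_of_lt hc.1
  have hslope : 0 ≤ (g s - g 0) / (s - 0) := by
    rw [← hceq]
    exact mul_nonneg (Real.exp_pos _).le (hd c hc0)
  have hgs : g 0 ≤ g s := by
    have hpos : 0 < s - 0 := by linarith
    have h := mul_nonneg hslope (le_of_lt hpos)
    rw [div_mul_cancel₀ _ (ne_of_gt hpos)] at h
    linarith
  have hg0 : g 0 = f 0 := by simp [hg]
  have : 0 ≤ Real.exp (μ * s) * f s := by
    have : 0 ≤ g s := le_trans (hg0 ▸ h0) hgs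
    simpa [hg] using this
  nlinarith [this, Real.exp_pos (μ * s)]
  
theorem nonneg_four_term_exp_sum
    (μ2 μ3 μ4 ρ1 ρ2 ρ3 ρ4 : ℝ)
    (hμ2 : 0 < μ2) (hμ23 : μ2 < μ3) (hμ34 : μ3 < μ4)
    (h1 : 0 ≤ ρ1)
    (h2 : 0 ≤ ρ1 + ρ2 + ρ3 + ρ4)
    (h3 : 0 ≤ ρ1 + (1 - μ3 / μ2) * ρ3 + (1 - μ4 / μ2) * ρ4)
    (h4 : 0 ≤ ρ1 + (1 - μ4 / μ3) * (1 - μ4 / μ2) * ρ4) :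
    (∀ s : ℝ, 0 ≤ s →
        0 ≤ ρ1 + ρ2 * Real.exp (-μ2 * s) + ρ3 * Real.exp (-μ3 * s)
            + ρ4 * Real.exp (-μ4 * s)) ∧
      (∀ lam1 lam2 lam3 lam4 : ℝ, 0 < lam4 → lam4 < lam3 → lam3 < lam2 → lam2 < lam1 →
        μ2 = -Real.log (lam2 / lam1) → μ3 = -Real.log (lam3 / lam1) →
        μ4 = -Real.log (lam4 / lam1) →
        ∀ t : ℕ, 0 ≤ ρ1 * lam1 ^ t + ρ2 * lam2 ^ t + ρ3 * lam3 ^ t + ρ4 * lam4 ^ t) := by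
  have hμ3 : 0 < μ3 := hμ2.trans hμ23
  have hμ4 : 0 < μ4 := hμ3.trans hμ34
  have E : ∀ (μ : ℝ) (x : ℝ),
      HasDerivAt (fun s : ℝ => Real.exp (-μ * s)) (-μ * Real.exp (-μ * x)) x := by
    intro μ x
    have h := (Real.hasDerivAt_exp (-μ * x)).comp x ((hasDerivAt_id x).const_mul (-μ))
    exact h.congr_deriv (by simp [mul_comm])
  set w4 : ℝ := (1 - μ4 / μ3) * (1 - μ4 / μ2) * ρ4 with hw4
  set v3 : ℝ := (1 - μ3 / μ2) * ρ3 with hv3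
  set v4 : ℝ := (1 - μ4 / μ2) * ρ4 with hv4
  -- innermost function F3
  have hF3 : ∀ s, 0 ≤ s → 0 ≤ ρ1 + w4 * Real.exp (-μ4 * s) := by
    apply nonneg_of_mul_add_deriv_nonneg μ4
      (f' := fun s => w4 * (-μ4 * Real.exp (-μ4 * s)))
    · intro x
      simpa [Pi.add_def] using (hasDerivAt_const x ρ1).add (((E μ4 x).const_mul w4))
    · simpa using h4
    · intro s _
      have : μ4 * (ρ1 + w4 * Real.exp (-μ4 * s)) + w4 * (-μ4 * Real.exp (-μ4 * s))
          = μ4 * ρ1 := by ring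
      rw [this]
      positivity
  -- F2
  have hF2 : ∀ s, 0 ≤ s →
      0 ≤ ρ1 + v3 * Real.exp (-μ3 * s) + v4 * Real.exp (-μ4 * s) := by
    apply nonneg_of_mul_add_deriv_nonneg μ3
      (f' := fun s => v3 * (-μ3 * Real.exp (-μ3 * s)) + v4 * (-μ4 * Real.exp (-μ4 * s)))
    · intro x
      simpa [Pi.add_def] using ((hasDerivAt_const x ρ1).add ((E μ3 x).const_mul v3)).add
        ((E μ4 x).const_mul v4)
    · simpa using h3
    · intro s hs
      have key : μ3 * (ρ1 + v3 * Real.exp (-μ3 * s) + v4 * Real.exp (-μ4 * s))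
          + (v3 * (-μ3 * Real.exp (-μ3 * s)) + v4 * (-μ4 * Real.exp (-μ4 * s)))
          = μ3 * (ρ1 + w4 * Real.exp (-μ4 * s)) := by
        rw [hw4, hv4]
        field_simp
        ring
      rw [key]
      exact mul_nonneg hμ3.le (hF3 s hs)
  -- F
  have hF : ∀ s : ℝ, 0 ≤ s →
      0 ≤ ρ1 + ρ2 * Real.exp (-μ2 * s) + ρ3 * Real.exp (-μ3 * s)
          + ρ4 * Real.exp (-μ4 * s) := by
    apply nonneg_of_mul_add_deriv_nonneg μ2
      (f' := fun s => ρ2 * (-μ2 * Real.exp (-μ2 * s)) + ρ3 * (-μ3 * Real.exp (-μ3 * s))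
        + ρ4 * (-μ4 * Real.exp (-μ4 * s)))
    · intro x
      simpa [Pi.add_def] using (((hasDerivAt_const x ρ1).add ((E μ2 x).const_mul ρ2)).add
        ((E μ3 x).const_mul ρ3)).add ((E μ4 x).const_mul ρ4)
    · simpa using h2
    · intro s hs
      have key : μ2 * (ρ1 + ρ2 * Real.exp (-μ2 * s) + ρ3 * Real.exp (-μ3 * s)
            + ρ4 * Real.exp (-μ4 * s))
          + (ρ2 * (-μ2 * Real.exp (-μ2 * s)) + ρ3 * (-μ3 * Real.exp (-μ3 * s))
            + ρ4 * (-μ4 * Real.exp (-μ4 * s)))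
          = μ2 * (ρ1 + v3 * Real.exp (-μ3 * s) + v4 * Real.exp (-μ4 * s)) := by
        rw [hv3, hv4]
        field_simp
        ring
      rw [key]
      exact mul_nonneg hμ2.le (hF2 s hs)
  refine ⟨hF, ?_⟩
  intro lam1 lam2 lam3 lam4 h4' h43 h32 h21 hm2 hm3 hm4 t
  have hl1 : 0 < lam1 := (h4'.trans h43).trans (h32.trans h21)
  have hl2 : 0 < lam2 := (h4'.trans h43).trans h32
  have hl3 : 0 < lam3 := h4'.trans h43
  have pow_eq : ∀ (lam μ : ℝ), 0 < lam → μ = -Real.log (lam / lam1) →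
      lam ^ t = lam1 ^ t * Real.exp (-μ * (t : ℝ)) := by
    intro lam μ hl hm
    have hdiv : 0 < lam / lam1 := div_pos hl hl1
    have : Real.exp (-μ * (t : ℝ)) = (lam / lam1) ^ t := by
      rw [hm]
      rw [show -(-Real.log (lam / lam1)) * (t : ℝ) = (t : ℝ) * Real.log (lam / lam1) by ring]
      rw [Real.exp_nat_mul, Real.exp_log hdiv]
    rw [this, div_pow, mul_div_cancel₀]
    exact pow_ne_zero t hl1.ne'
  have e2 := pow_eq lam2 μ2 hl2 hm2
  have e3 := pow_eq lam3 μ3 hl3 hm3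
  have e4 := pow_eq lam4 μ4 h4' hm4
  have hs : (0 : ℝ) ≤ (t : ℝ) := Nat.cast_nonneg t
  have := hF (t : ℝ) hs
  have key : ρ1 * lam1 ^ t + ρ2 * lam2 ^ t + ρ3 * lam3 ^ t + ρ4 * lam4 ^ t
      = lam1 ^ t * (ρ1 + ρ2 * Real.exp (-μ2 * (t : ℝ)) + ρ3 * Real.exp (-μ3 * (t : ℝ))
          + ρ4 * Real.exp (-μ4 * (t : ℝ))) := by
    rw [e2, e3, e4]; ring
  rw [key]
  exact mul_nonneg (pow_nonneg hl1.le t) this
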